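/- Fix integers k ≥ 1 and C ≥ k + 1. Define Q(a,b) = exp(2a + bk) + k·exp(a + b(k+1)) + (C − k − 1)·exp((k+2)b) and R(a,b) = log(exp(2a + bk) / Q(a,b)). Then for all (a,b) ∈ ℝ², the partial derivative ∂R/∂a(a,b) is strictly positive and the partial derivative ∂R/∂b(a,b) is strictly negative. -/

import Mathlib

open Real

/-- `Q(a,b) = exp(2a + bk) + k·exp(a + b(k+1)) + (C − k − 1)·exp((k+2)b)`. -/
noncomputable def Qfun (k C : ℕ) (a b : ℝ) : ℝ :=
  Real.exp (2 * a + b * k) + k * Real.exp (a + b * (k + 1))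
    + ((C : ℝ) - k - 1) * Real.exp ((k + 2) * b)

/-- `R(a,b) = log(exp(2a + bk) / Q(a,b))`. -/
noncomputable def Rfun (k C : ℕ) (a b : ℝ) : ℝ :=
  Real.log (Real.exp (2 * a + b * k) / Qfun k C a b)

lemma Qfun_pos (k C : ℕ) (hk : 1 ≤ k) (hkC : k + 1 ≤ C) (a b : ℝ) :
    0 < Qfun k C a b := by
  have hC : (0:ℝ) ≤ (C : ℝ) - k - 1 := by
    have : ((k:ℝ) + 1) ≤ (C:ℝ) := by exact_mod_cast hkC
    linarith
  have e1 := Real.exp_pos (2 * a + b * k)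
  have e2 := Real.exp_pos (a + b * (k + 1))
  have e3 := Real.exp_pos (((k:ℝ) + 2) * b)
  have hk' : (1:ℝ) ≤ (k:ℝ) := by exact_mod_cast hk
  unfold Qfun
  nlinarith [mul_nonneg hC e3.le]

lemma Rfun_eq (k C : ℕ) (hk : 1 ≤ k) (hkC : k + 1 ≤ C) (a b : ℝ) :
    Rfun k C a b = (2 * a + b * k) - Real.log (Qfun k C a b) := by
  unfold Rfun
  rw [Real.log_div (Real.exp_ne_zero _) (Qfun_pos k C hk hkC a b).ne',
    Real.log_exp]

/-- The partial derivative of `R` in `a` is strictly positive and the partial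
derivative of `R` in `b` is strictly negative, everywhere. -/
theorem Rfun_partial_deriv_signs (k C : ℕ) (hk : 1 ≤ k) (hkC : k + 1 ≤ C) :
    ∀ a b : ℝ,
      0 < deriv (fun x => Rfun k C x b) a
        ∧ deriv (fun x => Rfun k C a x) b < 0 := by
  intro a b
  have hC : (0:ℝ) ≤ (C : ℝ) - k - 1 := by
    have : ((k:ℝ) + 1) ≤ (C:ℝ) := by exact_mod_cast hkC
    linarith
  have hk' : (1:ℝ) ≤ (k:ℝ) := by exact_mod_cast hk
  have hQpos := Qfun_pos k C hk hkC a b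
  have e1 := Real.exp_pos (2 * a + b * (k:ℝ))
  have e2 := Real.exp_pos (a + b * ((k:ℝ) + 1))
  have e3 := Real.exp_pos (((k:ℝ) + 2) * b)
  -- derivative of Q in a
  have hQA : HasDerivAt (fun x => Qfun k C x b)
      (2 * Real.exp (2 * a + b * k) + (k:ℝ) * Real.exp (a + b * (k + 1))) a := by
    unfold Qfun
    have h0 := ((((hasDerivAt_id a).const_mul 2).add_const (b * (k:ℝ))).exp.add
      ((((hasDerivAt_id a).add_const (b * ((k:ℝ) + 1))).exp).const_mul (k:ℝ))).add_const
      (((C:ℝ) - k - 1) * Real.exp (((k:ℝ) + 2) * b))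
    simp only [id_eq, mul_one] at h0
    exact h0.congr_deriv (by ring)
  -- derivative of Q in b
  have hQB : HasDerivAt (fun x => Qfun k C a x)
      ((k:ℝ) * Real.exp (2 * a + b * k)
        + (k:ℝ) * ((k:ℝ) + 1) * Real.exp (a + b * (k + 1))
        + ((C:ℝ) - k - 1) * ((k:ℝ) + 2) * Real.exp (((k:ℝ) + 2) * b)) b := by
    unfold Qfun
    have h0 := ((((hasDerivAt_id b).mul_const (k:ℝ)).const_add (2 * a)).exp.add
      ((((hasDerivAt_id b).mul_const ((k:ℝ) + 1)).const_add a).exp.const_mul (k:ℝ))).add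
      ((((hasDerivAt_id b).const_mul ((k:ℝ) + 2)).exp).const_mul ((C:ℝ) - k - 1))
    simp only [id_eq, one_mul, mul_one] at h0
    exact h0.congr_deriv (by ring)
  constructor
  · have heq : (fun x => Rfun k C x b)
        = fun x => (2 * x + b * (k:ℝ)) - Real.log (Qfun k C x b) := by
      funext x; exact Rfun_eq k C hk hkC x b
    have hlin : HasDerivAt (fun x : ℝ => 2 * x + b * (k:ℝ)) 2 a := by
      simpa using ((hasDerivAt_id a).const_mul 2).add_const (b * (k:ℝ))
    have hR := hlin.sub (hQA.log hQpos.ne')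
    rw [heq, HasDerivAt.deriv (f := fun x => 2 * x + b * (k:ℝ) - Real.log (Qfun k C x b)) hR, sub_pos, div_lt_iff₀ hQpos]
    unfold Qfun
    nlinarith [mul_nonneg hC e3.le]
  · have heq : (fun x => Rfun k C a x)
        = fun x => (2 * a + x * (k:ℝ)) - Real.log (Qfun k C a x) := by
      funext x; exact Rfun_eq k C hk hkC a x
    have hlin : HasDerivAt (fun x : ℝ => 2 * a + x * (k:ℝ)) (k:ℝ) b := by
      simpa using ((hasDerivAt_id b).mul_const (k:ℝ)).const_add (2 * a)
    have hR := hlin.sub (hQB.log hQpos.ne')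
    rw [heq, HasDerivAt.deriv (f := fun x => 2 * a + x * (k:ℝ) - Real.log (Qfun k C a x)) hR, sub_neg, lt_div_iff₀ hQpos]
    unfold Qfun
    nlinarith [mul_nonneg hC e3.le, mul_nonneg (mul_nonneg hC e3.le) (by linarith : (0:ℝ) ≤ (k:ℝ))]
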